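/- Let n ≥ 1 and p ≥ 2 be integers, X an n×p real matrix with columns x_1,…,x_p, λ_univ = √((2/n) log p), a₀ ∈ (0,1), C₀ ≥ 1, and s = a₀ n / log p. Suppose there exists a map δ : ℝ^n → ℝ^p such that for every β ∈ ℝ^p with Σ_{j=1}^p min(|β_j|/λ_univ, 1) ≤ s + 1 one has ‖δ(Xβ) − β‖₂² ≤ 2 C₀ s (log p)/n. Then for every j ∈ {1,…,p} and every γ ∈ ℝ^{p−1} with X_{−j} γ = x_j, one has ‖γ‖₁² ≥ a₀ n / (4 C₀ log p). -/

import Mathlib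

open Finset

/-- if a decoder achieves the optimal ℓ2 recovery rate over capped-ℓ1 sparse
vectors in the noiseless case, then every representation of a column of `X` in terms of the
other columns has large ℓ1 norm. -/
theorem sparse_recovery_l1_lower_bound
    (n p : ℕ) (hn : 0 < n) (hp : 2 ≤ p)
    (X : Matrix (Fin n) (Fin p) ℝ)
    (lamUniv : ℝ) (hlamUniv : lamUniv = Real.sqrt ((2 / n) * Real.log p))
    (a₀ C₀ : ℝ) (ha₀0 : 0 < a₀) (ha₀1 : a₀ < 1) (hC₀ : 1 ≤ C₀)
    (s : ℝ) (hs : s = a₀ * n / Real.log p)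
    (δ : (Fin n → ℝ) → (Fin p → ℝ))
    (hδ : ∀ β : Fin p → ℝ,
      (∑ j, min (|β j| / lamUniv) 1) ≤ s + 1 →
      (∑ j, (δ (X.mulVec β) j - β j) ^ 2) ≤ 2 * C₀ * s * Real.log p / n)
    (j : Fin p) (γ : Fin p → ℝ)
    (hγ : ∀ i : Fin n, (∑ k ∈ Finset.univ.erase j, γ k * X i k) = X i j) :
    a₀ * n / (4 * C₀ * Real.log p) ≤ (∑ k ∈ Finset.univ.erase j, |γ k|) ^ 2 := by
  have hp1 : (1:ℝ) < p := by
    have : (2:ℝ) ≤ p := by exact_mod_cast hp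
    linarith
  have hlp0 : 0 < Real.log p := Real.log_pos hp1
  have hn0 : (0:ℝ) < n := by exact_mod_cast hn
  have hs0 : 0 < s := by rw [hs]; positivity
  have hC0 : 0 < C₀ := lt_of_lt_of_le one_pos hC₀
  have hlam0 : 0 < lamUniv := by
    rw [hlamUniv]; apply Real.sqrt_pos.2; positivity
  have hlam2 : lamUniv ^ 2 = 2 / n * Real.log p := by
    rw [hlamUniv, Real.sq_sqrt]; positivity
  set B : ℝ := 2 * C₀ * s * Real.log p / n with hB
  have hB0 : 0 ≤ B := by positivity
  set L : ℝ := ∑ k ∈ Finset.univ.erase j, |γ k| with hLdef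
  have hL0 : 0 ≤ L := Finset.sum_nonneg fun k _ => abs_nonneg _
  -- the condition on single vectors t • e_j holds for every t
  have cond1 : ∀ t : ℝ, (∑ k, min (|(fun k => if k = j then t else 0 : Fin p → ℝ) k| / lamUniv) 1) ≤ s + 1 := by
    intro t
    have hle : ∀ k ∈ Finset.univ, min (|(fun k => if k = j then t else 0 : Fin p → ℝ) k| / lamUniv) 1
        ≤ if k = j then (1:ℝ) else 0 := by
      intro k _
      by_cases hk : k = j
      · simp only [hk, if_true]; exact min_le_right _ _
      · simp [hk, zero_div]
    calc (∑ k, min (|(fun k => if k = j then t else 0 : Fin p → ℝ) k| / lamUniv) 1)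
        ≤ ∑ k, if k = j then (1:ℝ) else 0 := Finset.sum_le_sum hle
      _ = 1 := by simp
      _ ≤ s + 1 := by linarith
  -- key estimate from applying the decoder to a single vector
  have key1 : ∀ t : ℝ, (δ (X.mulVec ((fun k => if k = j then t else 0 : Fin p → ℝ))) j - t) ^ 2 ≤ B := by
    intro t
    have h := hδ ((fun k => if k = j then t else 0 : Fin p → ℝ)) (cond1 t)
    have hsingle := Finset.single_le_sum
      (f := fun k => (δ (X.mulVec ((fun k => if k = j then t else 0 : Fin p → ℝ))) k - (fun k => if k = j then t else 0 : Fin p → ℝ) k) ^ 2)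
      (fun k _ => sq_nonneg _) (Finset.mem_univ j)
    simp only [if_pos rfl] at hsingle
    exact le_trans hsingle h
  by_cases hLz : L = 0
  · -- degenerate case: the column x_j is zero, contradiction with the decoder bound
    exfalso
    have hγ0 : ∀ k ∈ Finset.univ.erase j, γ k = 0 := by
      intro k hk
      have := (Finset.sum_eq_zero_iff_of_nonneg (fun k _ => abs_nonneg (γ k))).1 hLz k hk
      exact abs_eq_zero.1 this
    have hXj : ∀ i, X i j = 0 := by
      intro i
      rw [← hγ i]
      exact Finset.sum_eq_zero fun k hk => by rw [hγ0 k hk, zero_mul]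
    have hv : ∀ t : ℝ, X.mulVec ((fun k => if k = j then t else 0 : Fin p → ℝ)) = X.mulVec ((fun k => if k = j then (0:ℝ) else 0 : Fin p → ℝ)) := by
      intro t
      funext i
      simp [Matrix.mulVec, dotProduct, mul_ite, mul_zero, Finset.sum_ite_eq', hXj i]
    set c : ℝ := δ (X.mulVec ((fun k => if k = j then (0:ℝ) else 0 : Fin p → ℝ))) j with hc
    have key2 : ∀ t : ℝ, (c - t) ^ 2 ≤ B := by
      intro t
      have := key1 t
      rwa [hv t] at this
    have := key2 (c + Real.sqrt B + 1)
    have hsq : Real.sqrt B ^ 2 = B := Real.sq_sqrt hB0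
    nlinarith [Real.sqrt_nonneg B]
  · have hLpos : 0 < L := lt_of_le_of_ne hL0 (Ne.symm hLz)
    set t : ℝ := s * lamUniv / L with htdef
    have ht0 : 0 < t := by positivity
    set γ' : Fin p → ℝ := fun k => if k = j then 0 else γ k with hγ'
    have hsum_erase : ∀ f : Fin p → ℝ, f j = 0 →
        (∑ k ∈ Finset.univ.erase j, f k) = ∑ k, f k :=
      fun f hf => Finset.sum_erase _ hf
    -- images agree
    have hveq : X.mulVec ((fun k => if k = j then t else 0 : Fin p → ℝ)) = X.mulVec (fun k => t * γ' k) := by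
      funext i
      have h1 : X.mulVec ((fun k => if k = j then t else 0 : Fin p → ℝ)) i = X i j * t := by
        simp [Matrix.mulVec, dotProduct, mul_ite, mul_zero, Finset.sum_ite_eq']
      have h2 : X.mulVec (fun k => t * γ' k) i = t * (X i j) := by
        simp only [Matrix.mulVec, dotProduct]
        have : ∑ k, X i k * (t * γ' k) = t * ∑ k, γ' k * X i k := by
          rw [Finset.mul_sum]; apply Finset.sum_congr rfl; intro k _; ring
        rw [this, ← hsum_erase (fun k => γ' k * X i k) (by simp [hγ'])]
        have : ∑ k ∈ Finset.univ.erase j, γ' k * X i k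
            = ∑ k ∈ Finset.univ.erase j, γ k * X i k := by
          apply Finset.sum_congr rfl
          intro k hk
          have hkj : k ≠ j := Finset.ne_of_mem_erase hk
          simp [hγ', hkj]
        rw [this, hγ i]
      rw [h1, h2, mul_comm]
    -- capped ℓ1 condition for t • γ'
    have cond2 : (∑ k, min (|t * γ' k| / lamUniv) 1) ≤ s + 1 := by
      have hle : ∀ k ∈ Finset.univ, min (|t * γ' k| / lamUniv) 1 ≤ t * |γ' k| / lamUniv := by
        intro k _
        calc min (|t * γ' k| / lamUniv) 1 ≤ |t * γ' k| / lamUniv := min_le_left _ _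
          _ = t * |γ' k| / lamUniv := by rw [abs_mul, abs_of_pos ht0]
      have hsumγ' : (∑ k, |γ' k|) = L := by
        rw [hLdef, ← hsum_erase (fun k => |γ' k|) (by simp [hγ'])]
        apply Finset.sum_congr rfl
        intro k hk
        have hkj : k ≠ j := Finset.ne_of_mem_erase hk
        simp [hγ', hkj]
      have hsum : (∑ k, t * |γ' k| / lamUniv) = t / lamUniv * L := by
        rw [← hsumγ', Finset.mul_sum]
        apply Finset.sum_congr rfl
        intro k _
        ring
      have htL : t / lamUniv * L = s := by
        rw [htdef]
        field_simp
      calc (∑ k, min (|t * γ' k| / lamUniv) 1)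
          ≤ ∑ k, t * |γ' k| / lamUniv := Finset.sum_le_sum hle
        _ = s := by rw [hsum, htL]
        _ ≤ s + 1 := by linarith
    -- apply the decoder to both vectors
    have h1 : (δ (X.mulVec (fun k => t * γ' k)) j - t) ^ 2 ≤ B := by
      have := key1 t
      rwa [hveq] at this
    have h2 : (δ (X.mulVec (fun k => t * γ' k)) j) ^ 2 ≤ B := by
      have h := hδ (fun k => t * γ' k) cond2
      have hsingle := Finset.single_le_sum
        (f := fun k => (δ (X.mulVec (fun k => t * γ' k)) k - t * γ' k) ^ 2)
        (fun k _ => sq_nonneg _) (Finset.mem_univ j)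
      have hj0 : t * γ' j = 0 := by simp [hγ']
      simp only [hj0, sub_zero] at hsingle
      exact le_trans hsingle h
    have htB : t ^ 2 ≤ 4 * B := by nlinarith
    have ht2 : t ^ 2 * L ^ 2 = s ^ 2 * (2 / n * Real.log p) := by
      rw [htdef, ← hlam2]
      field_simp
    have hkey : s ^ 2 * (2 / n * Real.log p) ≤ 4 * B * L ^ 2 := by
      rw [← ht2]
      exact mul_le_mul_of_nonneg_right htB (sq_nonneg L)
    have hpos : 0 < 2 * s * Real.log p / n := by positivity
    have hmul : (2 * s * Real.log p / n) * s ≤ (2 * s * Real.log p / n) * (4 * C₀ * L ^ 2) := by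
      calc (2 * s * Real.log p / n) * s = s ^ 2 * (2 / n * Real.log p) := by ring
        _ ≤ 4 * B * L ^ 2 := hkey
        _ = (2 * s * Real.log p / n) * (4 * C₀ * L ^ 2) := by rw [hB]; ring
    have hsle : s ≤ 4 * C₀ * L ^ 2 := le_of_mul_le_mul_left hmul hpos
    have hgoal_eq : a₀ * n / (4 * C₀ * Real.log p) = s / (4 * C₀) := by
      rw [hs]
      field_simp
    rw [hgoal_eq, div_le_iff₀ (by positivity)]
    linarith
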